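/- Let (u,p) ∈ V × Q be arbitrary with (u,p) ≠ (0,0). Then γ · (‖u‖_V² + ‖p‖_Q²)^{1/2} ≤ S*(u,p), where S*(u,p) := sup over (0,0) ≠ (w,r) ∈ V × Q of |A((w,r);(u,p))| / (‖w‖_V² + ‖r‖_Q²)^{1/2}, and γ := (1/2) · (α⁻²(1 + 2C_b²M²)² + 2C_b²)^{-1/2}. In other words, the combined Oseen-type saddle-point form A also satisfies an inf-sup condition in its first argument, with the same explicit constant γ depending only on α, M, C_b. -/

import Mathlib

set_option maxHeartbeats 4000000 in
/-- The combined Oseen-type saddle-point form `A` on `X = V × Q` satisfies an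
inf-sup condition in its first argument with explicit constant
`γ = (1/2)·(α⁻²(1+2C_b²M²)² + 2C_b²)^(-1/2)`. -/
theorem oseen_saddle_infsup_first_argument
    {V Q : Type*} [NormedAddCommGroup V] [InnerProductSpace ℂ V] [CompleteSpace V]
    [NormedAddCommGroup Q] [InnerProductSpace ℂ Q] [CompleteSpace Q]
    (a : V →ₗ[ℂ] V →ₛₗ[starRingEnd ℂ] ℂ)
    (d : Q →ₗ[ℂ] V →ₛₗ[starRingEnd ℂ] ℂ)
    (α M M_d C_b : ℝ) (hα : 0 < α) (hM : 0 < M) (hMd : 0 < M_d) (hCb : 0 < C_b)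
    (hcoer : ∀ v : V, α * ‖v‖ ^ 2 ≤ (a v v).re)
    (hcont : ∀ u v : V, ‖a u v‖ ≤ M * ‖u‖ * ‖v‖)
    (hdbdd : ∀ (q : Q) (v : V), ‖d q v‖ ≤ M_d * ‖q‖ * ‖v‖)
    (hinv : ∀ q : Q, ∃ vt : V, d q vt = (‖q‖ : ℂ) ^ 2 ∧ ‖vt‖ ≤ C_b * ‖q‖)
    (A : V × Q → V × Q → ℂ)
    (hA : ∀ (u : V) (p : Q) (v : V) (q : Q),
      A (u, p) (v, q) = a u v + d p v - starRingEnd ℂ (d q u))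
    (γ : ℝ)
    (hγ : γ = (1 / 2) / Real.sqrt (α⁻¹ ^ 2 * (1 + 2 * C_b ^ 2 * M ^ 2) ^ 2 + 2 * C_b ^ 2))
    (u : V) (p : Q) (hup : (u, p) ≠ (0, 0)) :
    γ * Real.sqrt (‖u‖ ^ 2 + ‖p‖ ^ 2) ≤
      sSup {s : ℝ | ∃ (w : V) (r : Q), (w, r) ≠ (0, 0) ∧
        s = ‖A (w, r) (u, p)‖ / Real.sqrt (‖w‖ ^ 2 + ‖r‖ ^ 2)} := by
  obtain ⟨vt, hdvt, hvt⟩ := hinv p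
  set l : ℝ := α⁻¹ * (1 + 2 * C_b ^ 2 * M ^ 2) with hl
  have hlpos : 0 < l := by positivity
  set w : V := (l : ℂ) • u - vt with hw
  set r : Q := (l : ℂ) • p with hr
  -- the test pair is nonzero
  have hne : (w, r) ≠ (0, 0) := by
    intro h
    rw [Prod.ext_iff] at h
    obtain ⟨hw0, hr0⟩ := h
    have hp0 : p = 0 := by
      have := hr0
      simp only [hr, smul_eq_zero, Complex.ofReal_eq_zero] at this
      rcases this with h | h
      · exact absurd h hlpos.ne'
      · exact h
    have hvt0 : vt = 0 := by
      have : ‖vt‖ ≤ 0 := by simpa [hp0] using hvt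
      exact norm_le_zero_iff.mp this
    have hu0 : u = 0 := by
      have := hw0
      simp only [hw, hvt0, sub_zero, smul_eq_zero, Complex.ofReal_eq_zero] at this
      rcases this with h | h
      · exact absurd h hlpos.ne'
      · exact h
    exact hup (by simp [hu0, hp0])
  -- explicit formula for the test value
  have hBeq : A (w, r) (u, p) = (l : ℂ) * (a u u) - a vt u + (l : ℂ) * (d p u)
      - ((l : ℂ) * (starRingEnd ℂ (d p u)) - ((‖p‖ ^ 2 : ℝ) : ℂ)) := by
    rw [hA, hw, hr]
    have h1 : a ((l : ℂ) • u - vt) u = (l : ℂ) * (a u u) - a vt u := by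
      simp [map_sub, map_smul, LinearMap.sub_apply, LinearMap.smul_apply, smul_eq_mul]
    have h2 : d ((l : ℂ) • p) u = (l : ℂ) * (d p u) := by
      simp [map_smul, LinearMap.smul_apply, smul_eq_mul]
    have h3 : (d p) ((l : ℂ) • u - vt) = (l : ℂ) * (d p u) - ((‖p‖ ^ 2 : ℝ) : ℂ) := by
      rw [map_sub, map_smulₛₗ, hdvt]
      push_cast
      simp [Complex.conj_ofReal, smul_eq_mul]
    rw [h1, h2, h3]
    rw [map_sub, map_mul, Complex.conj_ofReal]
    have : (starRingEnd ℂ) ((‖p‖ ^ 2 : ℝ) : ℂ) = ((‖p‖ ^ 2 : ℝ) : ℂ) := Complex.conj_ofReal _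
    rw [this]
  -- real part
  have hBre : (A (w, r) (u, p)).re = l * (a u u).re - (a vt u).re + ‖p‖ ^ 2 := by
    rw [hBeq]
    simp only [Complex.sub_re, Complex.add_re, Complex.mul_re, Complex.ofReal_re,
      Complex.ofReal_im, Complex.conj_re, Complex.conj_im]
    ring
  have hare : α * ‖u‖ ^ 2 ≤ (a u u).re := hcoer u
  have havt : (a vt u).re ≤ M * (C_b * ‖p‖) * ‖u‖ := by
    have h1 : (a vt u).re ≤ ‖a vt u‖ := by
      exact Complex.re_le_norm _
    have h2 : ‖a vt u‖ ≤ M * ‖vt‖ * ‖u‖ := hcont vt u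
    have h3 : M * ‖vt‖ * ‖u‖ ≤ M * (C_b * ‖p‖) * ‖u‖ :=
      mul_le_mul_of_nonneg_right (mul_le_mul_of_nonneg_left hvt hM.le) (norm_nonneg u)
    linarith
  have hla : l * α = 1 + 2 * C_b ^ 2 * M ^ 2 := by
    rw [hl]; field_simp
  have hReB : (3 / 4) * (‖u‖ ^ 2 + ‖p‖ ^ 2) ≤ (A (w, r) (u, p)).re := by
    rw [hBre]
    have h4 : l * (α * ‖u‖ ^ 2) ≤ l * (a u u).re :=
      mul_le_mul_of_nonneg_left hare hlpos.le
    have h5 : l * (α * ‖u‖ ^ 2) = (1 + 2 * C_b ^ 2 * M ^ 2) * ‖u‖ ^ 2 := by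
      rw [show l * (α * ‖u‖ ^ 2) = (l * α) * ‖u‖ ^ 2 by ring, hla]
    linarith [sq_nonneg (M * C_b * ‖u‖ - ‖p‖ / 2), sq_nonneg (C_b * M * ‖u‖),
      sq_nonneg ‖u‖, sq_nonneg ‖p‖]
  -- norm bounds on the test pair
  have hln : ‖(l : ℂ)‖ = l := by
    rw [Complex.norm_real, Real.norm_eq_abs, abs_of_pos hlpos]
  have hwn : ‖w‖ ≤ l * ‖u‖ + C_b * ‖p‖ := by
    calc ‖w‖ ≤ ‖(l : ℂ) • u‖ + ‖vt‖ := norm_sub_le _ _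
    _ ≤ l * ‖u‖ + C_b * ‖p‖ := by
        rw [norm_smul, hln]
        exact add_le_add le_rfl hvt
  have hrn : ‖r‖ = l * ‖p‖ := by rw [hr, norm_smul, hln]
  have hsum : ‖w‖ ^ 2 + ‖r‖ ^ 2 ≤ (2 * l ^ 2 + 2 * C_b ^ 2) * (‖u‖ ^ 2 + ‖p‖ ^ 2) := by
    have hw2 : ‖w‖ ^ 2 ≤ (l * ‖u‖ + C_b * ‖p‖) ^ 2 :=
      pow_le_pow_left₀ (norm_nonneg w) hwn 2
    have hw3 : (l * ‖u‖ + C_b * ‖p‖) ^ 2 ≤ 2 * l ^ 2 * ‖u‖ ^ 2 + 2 * C_b ^ 2 * ‖p‖ ^ 2 := by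
      linarith [sq_nonneg (l * ‖u‖ - C_b * ‖p‖)]
    have hr2 : ‖r‖ ^ 2 = l ^ 2 * ‖p‖ ^ 2 := by rw [hrn]; ring
    linarith [mul_nonneg (sq_nonneg l) (sq_nonneg ‖p‖),
      mul_nonneg (sq_nonneg C_b) (sq_nonneg ‖u‖)]
  -- positivity of the denominator
  have hDpos : 0 < Real.sqrt (‖w‖ ^ 2 + ‖r‖ ^ 2) := by
    apply Real.sqrt_pos.mpr
    have : w ≠ 0 ∨ r ≠ 0 := by
      by_contra h
      push_neg at h
      exact hne (by simp [h.1, h.2])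
    rcases this with h | h
    · have h2 := pow_pos (norm_pos_iff.mpr h) 2
      linarith [sq_nonneg ‖r‖]
    · have h2 := pow_pos (norm_pos_iff.mpr h) 2
      linarith [sq_nonneg ‖w‖]
  have hNnn : (0 : ℝ) ≤ ‖u‖ ^ 2 + ‖p‖ ^ 2 := by positivity
  -- the sqrt comparison
  have hDle : Real.sqrt (‖w‖ ^ 2 + ‖r‖ ^ 2) ≤
      Real.sqrt (2 * l ^ 2 + 2 * C_b ^ 2) * Real.sqrt (‖u‖ ^ 2 + ‖p‖ ^ 2) := by
    rw [← Real.sqrt_mul (by positivity)]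
    exact Real.sqrt_le_sqrt hsum
  -- γ * sqrt(2l² + 2C_b²) ≤ 3/4
  have hE1pos : (0 : ℝ) < α⁻¹ ^ 2 * (1 + 2 * C_b ^ 2 * M ^ 2) ^ 2 + 2 * C_b ^ 2 := by
    positivity
  have hl2 : l ^ 2 = α⁻¹ ^ 2 * (1 + 2 * C_b ^ 2 * M ^ 2) ^ 2 := by rw [hl]; ring
  have hγpos : 0 < γ := by
    rw [hγ]
    positivity
  have hγE2 : γ * Real.sqrt (2 * l ^ 2 + 2 * C_b ^ 2) ≤ 3 / 4 := by
    set E1 : ℝ := α⁻¹ ^ 2 * (1 + 2 * C_b ^ 2 * M ^ 2) ^ 2 + 2 * C_b ^ 2 with hE1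
    have hle : 2 * l ^ 2 + 2 * C_b ^ 2 ≤ (3 / 2) ^ 2 * E1 := by
      rw [hE1, ← hl2]
      linarith [sq_nonneg l, sq_nonneg C_b]
    have h1 : Real.sqrt (2 * l ^ 2 + 2 * C_b ^ 2) ≤ (3 / 2) * Real.sqrt E1 := by
      calc Real.sqrt (2 * l ^ 2 + 2 * C_b ^ 2) ≤ Real.sqrt ((3 / 2) ^ 2 * E1) :=
            Real.sqrt_le_sqrt hle
      _ = (3 / 2) * Real.sqrt E1 := by
          rw [Real.sqrt_mul (by positivity), Real.sqrt_sq (by norm_num)]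
    have hs1 : 0 < Real.sqrt E1 := Real.sqrt_pos.mpr hE1pos
    rw [hγ]
    calc (1 / 2) / Real.sqrt E1 * Real.sqrt (2 * l ^ 2 + 2 * C_b ^ 2)
        ≤ (1 / 2) / Real.sqrt E1 * ((3 / 2) * Real.sqrt E1) := by
          apply mul_le_mul_of_nonneg_left h1
          positivity
    _ = 3 / 4 := by field_simp; ring
  -- norm lower bound of the test value
  have hBnorm : (3 / 4) * (‖u‖ ^ 2 + ‖p‖ ^ 2) ≤ ‖A (w, r) (u, p)‖ := by
    refine le_trans hReB ?_
    exact Complex.re_le_norm _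
  -- the key inequality
  have key : γ * Real.sqrt (‖u‖ ^ 2 + ‖p‖ ^ 2) * Real.sqrt (‖w‖ ^ 2 + ‖r‖ ^ 2)
      ≤ ‖A (w, r) (u, p)‖ := by
    calc γ * Real.sqrt (‖u‖ ^ 2 + ‖p‖ ^ 2) * Real.sqrt (‖w‖ ^ 2 + ‖r‖ ^ 2)
        ≤ γ * Real.sqrt (‖u‖ ^ 2 + ‖p‖ ^ 2) *
          (Real.sqrt (2 * l ^ 2 + 2 * C_b ^ 2) * Real.sqrt (‖u‖ ^ 2 + ‖p‖ ^ 2)) := by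
          apply mul_le_mul_of_nonneg_left hDle
          positivity
    _ = γ * Real.sqrt (2 * l ^ 2 + 2 * C_b ^ 2) *
          (Real.sqrt (‖u‖ ^ 2 + ‖p‖ ^ 2) * Real.sqrt (‖u‖ ^ 2 + ‖p‖ ^ 2)) := by ring
    _ = γ * Real.sqrt (2 * l ^ 2 + 2 * C_b ^ 2) * (‖u‖ ^ 2 + ‖p‖ ^ 2) := by
          rw [Real.mul_self_sqrt hNnn]
    _ ≤ (3 / 4) * (‖u‖ ^ 2 + ‖p‖ ^ 2) := mul_le_mul_of_nonneg_right hγE2 hNnn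
    _ ≤ ‖A (w, r) (u, p)‖ := hBnorm
  have hfinal : γ * Real.sqrt (‖u‖ ^ 2 + ‖p‖ ^ 2) ≤
      ‖A (w, r) (u, p)‖ / Real.sqrt (‖w‖ ^ 2 + ‖r‖ ^ 2) :=
    (le_div_iff₀ hDpos).mpr key
  -- the set is bounded above
  have hbdd : BddAbove {s : ℝ | ∃ (w : V) (r : Q), (w, r) ≠ (0, 0) ∧
      s = ‖A (w, r) (u, p)‖ / Real.sqrt (‖w‖ ^ 2 + ‖r‖ ^ 2)} := by
    refine ⟨(M + 2 * M_d) * (‖u‖ + ‖p‖), ?_⟩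
    rintro s ⟨w', r', hne', rfl⟩
    have hD'pos : 0 < Real.sqrt (‖w'‖ ^ 2 + ‖r'‖ ^ 2) := by
      apply Real.sqrt_pos.mpr
      have : w' ≠ 0 ∨ r' ≠ 0 := by
        by_contra h
        push_neg at h
        exact hne' (by simp [h.1, h.2])
      rcases this with h | h
      · have h2 := pow_pos (norm_pos_iff.mpr h) 2
        linarith [sq_nonneg ‖r'‖]
      · have h2 := pow_pos (norm_pos_iff.mpr h) 2
        linarith [sq_nonneg ‖w'‖]
    have hw'D : ‖w'‖ ≤ Real.sqrt (‖w'‖ ^ 2 + ‖r'‖ ^ 2) :=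
      Real.le_sqrt_of_sq_le (by linarith [sq_nonneg ‖r'‖])
    have hr'D : ‖r'‖ ≤ Real.sqrt (‖w'‖ ^ 2 + ‖r'‖ ^ 2) :=
      Real.le_sqrt_of_sq_le (by linarith [sq_nonneg ‖w'‖])
    have hnum : ‖A (w', r') (u, p)‖ ≤
        ((M + 2 * M_d) * (‖u‖ + ‖p‖)) * Real.sqrt (‖w'‖ ^ 2 + ‖r'‖ ^ 2) := by
      rw [hA]
      calc ‖a w' u + d r' u - (starRingEnd ℂ) (d p w')‖
          ≤ ‖a w' u + d r' u‖ + ‖(starRingEnd ℂ) (d p w')‖ := norm_sub_le _ _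
      _ ≤ ‖a w' u‖ + ‖d r' u‖ + ‖(starRingEnd ℂ) (d p w')‖ := by
          have := norm_add_le (a w' u) (d r' u)
          linarith
      _ = ‖a w' u‖ + ‖d r' u‖ + ‖d p w'‖ := by rw [RCLike.norm_conj]
      _ ≤ M * ‖w'‖ * ‖u‖ + M_d * ‖r'‖ * ‖u‖ + M_d * ‖p‖ * ‖w'‖ := by
          have h1 := hcont w' u
          have h2 := hdbdd r' u
          have h3 := hdbdd p w'
          linarith
      _ ≤ ((M + 2 * M_d) * (‖u‖ + ‖p‖)) * Real.sqrt (‖w'‖ ^ 2 + ‖r'‖ ^ 2) := by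
          set D' := Real.sqrt (‖w'‖ ^ 2 + ‖r'‖ ^ 2) with hD'
          have hD'nn : 0 ≤ D' := Real.sqrt_nonneg _
          have e1 : M * ‖w'‖ * ‖u‖ ≤ M * D' * ‖u‖ :=
            mul_le_mul_of_nonneg_right
              (mul_le_mul_of_nonneg_left hw'D hM.le) (norm_nonneg u)
          have e2 : M_d * ‖r'‖ * ‖u‖ ≤ M_d * D' * ‖u‖ :=
            mul_le_mul_of_nonneg_right
              (mul_le_mul_of_nonneg_left hr'D hMd.le) (norm_nonneg u)
          have e3 : M_d * ‖p‖ * ‖w'‖ ≤ M_d * ‖p‖ * D' :=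
            mul_le_mul_of_nonneg_left hw'D (by positivity)
          have e4 : M * D' * ‖u‖ + M_d * D' * ‖u‖ + M_d * ‖p‖ * D'
              ≤ ((M + 2 * M_d) * (‖u‖ + ‖p‖)) * D' := by
            have hdiff : ((M + 2 * M_d) * (‖u‖ + ‖p‖)) * D'
                - (M * D' * ‖u‖ + M_d * D' * ‖u‖ + M_d * ‖p‖ * D')
                = (M * ‖p‖ + M_d * ‖u‖ + M_d * ‖p‖) * D' := by ring
            have hnn : 0 ≤ (M * ‖p‖ + M_d * ‖u‖ + M_d * ‖p‖) * D' := by positivity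
            linarith
          linarith
    exact (div_le_iff₀ hD'pos).mpr hnum
  have hmem : ‖A (w, r) (u, p)‖ / Real.sqrt (‖w‖ ^ 2 + ‖r‖ ^ 2) ∈
      {s : ℝ | ∃ (w : V) (r : Q), (w, r) ≠ (0, 0) ∧
        s = ‖A (w, r) (u, p)‖ / Real.sqrt (‖w‖ ^ 2 + ‖r‖ ^ 2)} :=
    ⟨w, r, hne, rfl⟩
  exact le_trans hfinal (le_csSup hbdd hmem)
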